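/- arXiv:1712.03015 — 3 statements merged into one kernel-verified Lean document; each statement's English description precedes it below -/
import Mathlib

section
/- If H(x) denotes the number of non-zero integral ideals of the ring of integers O_K of a number field K with norm at most x, then the partial sums of reciprocal norms satisfy: sum over non-zero integral ideals a with N(a) ≤ x of 1/N(a) is asymptotic to c·log x as x → ∞, where c is the positive constant with H(x) = c·x + O(x^{1-1/d}), d = [K:ℚ]. -/
open Filter Topology NumberField Asymptotics

/-- Number of non-zero integral ideals of `𝓞 K` with absolute norm at most `x`. -/
noncomputable def idealCount (K : Type*) [Field K] [NumberField K] (x : ℕ) : ℕ :=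
  Nat.card {I : Ideal (𝓞 K) // I ≠ ⊥ ∧ Ideal.absNorm I ≤ x}

/-- Number of ideals in `S` (necessarily non-zero) with absolute norm at most `x`. -/
noncomputable def setCount (K : Type*) [Field K] [NumberField K]
    (S : Set (Ideal (𝓞 K))) (x : ℕ) : ℕ :=
  Nat.card {I : Ideal (𝓞 K) // I ∈ S ∧ I ≠ ⊥ ∧ Ideal.absNorm I ≤ x}

/-- Sum of reciprocal norms `∑_{b ∈ S, N b ≤ x} 1 / N b` over non-zero ideals of `S`. -/
noncomputable def partialSum (K : Type*) [Field K] [NumberField K]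
    (S : Set (Ideal (𝓞 K))) (x : ℕ) : ℝ :=
  ∑ k ∈ Finset.Icc 1 x,
    (Nat.card {I : Ideal (𝓞 K) // I ∈ S ∧ Ideal.absNorm I = k} : ℝ) / k

/-- Abel summation helper. -/
lemma abel_aux (F b : ℕ → ℝ) (hF0 : F 0 = 0) (hb : ∀ n : ℕ, b (n + 1) = F (n + 1) - F n) :
    ∀ n : ℕ, ∑ k ∈ Finset.Icc 1 n, b k / k
      = F n / n + ∑ k ∈ Finset.range n, F k * (1 / (k : ℝ) - 1 / ((k : ℝ) + 1)) := by
  intro n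
  induction n with
  | zero => simp
  | succ m ih =>
    rw [Finset.sum_Icc_succ_top (Nat.le_add_left 1 m), ih, hb m, Finset.sum_range_succ]
    rcases Nat.eq_zero_or_pos m with rfl | hm
    · simp [hF0]
    · have hm0 : ((m : ℝ)) ≠ 0 := by positivity
      have hm1 : ((m : ℝ) + 1) ≠ 0 := by positivity
      push_cast
      field_simp
      ring

lemma idealCount_zero (K : Type*) [Field K] [NumberField K] : idealCount K 0 = 0 := by
  have : IsEmpty {I : Ideal (𝓞 K) // I ≠ ⊥ ∧ Ideal.absNorm I ≤ 0} :=
    ⟨fun ⟨I, h0, hle⟩ => h0 (Ideal.absNorm_eq_zero_iff.mp (Nat.le_zero.mp hle))⟩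
  exact Nat.card_of_isEmpty

lemma idealCount_succ (K : Type*) [Field K] [NumberField K] (x : ℕ) :
    idealCount K (x + 1) = idealCount K x
      + Nat.card {I : Ideal (𝓞 K) // I ∈ Set.univ ∧ Ideal.absNorm I = x + 1} := by
  have hfin1 : {I : Ideal (𝓞 K) | I ≠ ⊥ ∧ Ideal.absNorm I ≤ x}.Finite :=
    (Ideal.finite_setOf_absNorm_le x).subset fun I h => h.2
  have hfin2 : {I : Ideal (𝓞 K) | I ∈ Set.univ ∧ Ideal.absNorm I = x + 1}.Finite :=
    (Ideal.finite_setOf_absNorm_eq (x + 1)).subset fun I h => h.2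
  have hdis : Disjoint {I : Ideal (𝓞 K) | I ≠ ⊥ ∧ Ideal.absNorm I ≤ x}
      {I : Ideal (𝓞 K) | I ∈ Set.univ ∧ Ideal.absNorm I = x + 1} := by
    rw [Set.disjoint_left]
    rintro I ⟨_, hle⟩ ⟨_, heq⟩
    omega
  have h1 : {I : Ideal (𝓞 K) | I ≠ ⊥ ∧ Ideal.absNorm I ≤ x + 1}
      = {I : Ideal (𝓞 K) | I ≠ ⊥ ∧ Ideal.absNorm I ≤ x}
        ∪ {I : Ideal (𝓞 K) | I ∈ Set.univ ∧ Ideal.absNorm I = x + 1} := by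
    ext I
    simp only [Set.mem_union, Set.mem_setOf_eq, Set.mem_univ, true_and]
    constructor
    · rintro ⟨h0, hle⟩
      rcases Nat.lt_or_ge (Ideal.absNorm I) (x + 1) with h | h
      · exact Or.inl ⟨h0, Nat.lt_succ_iff.mp h⟩
      · exact Or.inr (le_antisymm hle h)
    · rintro (⟨h0, hle⟩ | h)
      · exact ⟨h0, hle.trans (Nat.le_succ x)⟩
      · refine ⟨fun hbot => ?_, h.le⟩
        rw [Ideal.absNorm_eq_zero_iff.mpr hbot] at h
        omega
  have e1 : idealCount K (x + 1)
      = {I : Ideal (𝓞 K) | I ≠ ⊥ ∧ Ideal.absNorm I ≤ x + 1}.ncard :=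
    Nat.card_coe_set_eq _
  have e2 : idealCount K x = {I : Ideal (𝓞 K) | I ≠ ⊥ ∧ Ideal.absNorm I ≤ x}.ncard :=
    Nat.card_coe_set_eq _
  have e3 : Nat.card {I : Ideal (𝓞 K) // I ∈ Set.univ ∧ Ideal.absNorm I = x + 1}
      = {I : Ideal (𝓞 K) | I ∈ Set.univ ∧ Ideal.absNorm I = x + 1}.ncard :=
    Nat.card_coe_set_eq _
  rw [e1, e2, e3, h1, Set.ncard_union_eq hdis hfin1 hfin2]

/-- the partial sums of reciprocal norms are asymptotic to `c log x`,
where `c` is the constant in the ideal counting theorem `H(x) = c x + O(x^(1-1/d))`. -/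
theorem partialSum_univ_isEquivalent_log (K : Type*) [Field K] [NumberField K]
    (c : ℝ) (hc : 0 < c)
    (hH : (fun x : ℕ => (idealCount K x : ℝ) - c * x) =O[atTop]
      (fun x : ℕ => (x : ℝ) ^ ((1 : ℝ) - 1 / (Module.finrank ℚ K)))) :
    (fun x : ℕ => partialSum K Set.univ x) ~[atTop] (fun x : ℕ => c * Real.log x) := by
  classical
  have hd0 : 0 < Module.finrank ℚ K := Module.finrank_pos
  set e : ℝ := 1 - 1 / (Module.finrank ℚ K : ℝ) with he
  have hdR : (0 : ℝ) < 1 / (Module.finrank ℚ K : ℝ) := by positivity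
  have he1 : e < 1 := by rw [he]; linarith
  set H : ℕ → ℝ := fun x => (idealCount K x : ℝ) with hHdef
  set E : ℕ → ℝ := fun x => H x - c * x with hEdef
  have hE_O : (fun k : ℕ => E k) =O[atTop] fun k : ℕ => (k : ℝ) ^ e := hH
  have hH0 : H 0 = 0 := by simp [hHdef, idealCount_zero]
  set b : ℕ → ℝ :=
    fun k => (Nat.card {I : Ideal (𝓞 K) // I ∈ Set.univ ∧ Ideal.absNorm I = k} : ℝ) with hbdef
  have hb : ∀ n : ℕ, b (n + 1) = H (n + 1) - H n := by
    intro n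
    have := idealCount_succ K n
    rw [hbdef, hHdef]
    simp only []
    rw [this]
    push_cast
    ring
  have habel : ∀ n : ℕ, partialSum K Set.univ n
      = H n / n + ∑ k ∈ Finset.range n, H k * (1 / (k : ℝ) - 1 / ((k : ℝ) + 1)) :=
    abel_aux H b hH0 hb
  set u : ℕ → ℝ := fun k => E k * (1 / (k : ℝ) - 1 / ((k : ℝ) + 1)) with hudef
  -- step 1: summability of u
  have h2 : (fun k : ℕ => 1 / (k : ℝ) - 1 / ((k : ℝ) + 1)) =O[atTop]
      fun k : ℕ => (k : ℝ) ^ (-2 : ℝ) := by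
    rw [isBigO_iff]
    refine ⟨1, ?_⟩
    filter_upwards [eventually_ge_atTop 1] with k hk
    have hk0 : (0 : ℝ) < k := by exact_mod_cast hk
    have hr : (k : ℝ) ^ (-2 : ℝ) = (((k : ℝ)) ^ (2 : ℕ))⁻¹ := by
      rw [show (-2 : ℝ) = -((2 : ℕ) : ℝ) by norm_num, Real.rpow_neg hk0.le, Real.rpow_natCast]
    have heq : 1 / (k : ℝ) - 1 / ((k : ℝ) + 1) = ((k : ℝ) * ((k : ℝ) + 1))⁻¹ := by
      field_simp
      ring
    rw [heq, hr, Real.norm_eq_abs, Real.norm_eq_abs, one_mul, abs_of_pos (by positivity),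
      abs_of_pos (by positivity)]
    rw [inv_le_inv₀ (by positivity) (by positivity)]
    nlinarith
  have hu_O : u =O[atTop] fun k : ℕ => (k : ℝ) ^ (e - 2) := by
    refine (hE_O.mul h2).congr' EventuallyEq.rfl ?_
    filter_upwards [eventually_ge_atTop 1] with k hk
    have hk0 : (0 : ℝ) < k := by exact_mod_cast hk
    rw [← Real.rpow_add hk0]
    congr 1 <;> ring
  have hu_sum : Summable u :=
    summable_of_isBigO_nat (Real.summable_nat_rpow.mpr (by linarith)) hu_O
  have hT : Tendsto (fun n : ℕ => ∑ k ∈ Finset.range n, u k) atTop (𝓝 (∑' k, u k)) :=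
    hu_sum.hasSum.tendsto_sum_nat
  -- step 2 : E n / n → 0
  have hEx : Tendsto (fun n : ℕ => E n / n) atTop (𝓝 0) := by
    have h1 : (fun n : ℕ => E n / n) =O[atTop] fun n : ℕ => (n : ℝ) ^ (e - 1) := by
      refine ((hE_O.mul (isBigO_refl (fun n : ℕ => ((n : ℝ))⁻¹) atTop)).congr'
        (Eventually.of_forall fun n => (div_eq_mul_inv _ _).symm) ?_)
      filter_upwards [eventually_ge_atTop 1] with k hk
      have hk0 : (0 : ℝ) < k := by exact_mod_cast hk
      rw [show ((k:ℝ))⁻¹ = (k:ℝ) ^ (-1 : ℝ) by rw [Real.rpow_neg_one], ← Real.rpow_add hk0]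
      congr 1 <;> ring
    refine h1.trans_tendsto ?_
    have := (tendsto_rpow_neg_atTop (show (0:ℝ) < 1 - e by linarith)).comp
      (tendsto_natCast_atTop_atTop : Tendsto (fun n : ℕ => (n : ℝ)) atTop atTop)
    simpa [Function.comp_def, neg_sub] using this
  -- step 3 : harmonic
  have hharm : Tendsto (fun n : ℕ => (∑ k ∈ Finset.range n, (1 : ℝ) / ((k : ℝ) + 1))
      - Real.log n) atTop (𝓝 Real.eulerMascheroniConstant) := by
    refine Real.tendsto_harmonic_sub_log.congr fun n => ?_
    congr 1
    rw [harmonic]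
    push_cast
    simp [one_div]
  have hkey : ∀ m : ℕ,
      (1 : ℝ) + ∑ k ∈ Finset.range (m + 1), (k : ℝ) * (1 / (k : ℝ) - 1 / ((k : ℝ) + 1))
        = ∑ k ∈ Finset.range (m + 1), (1 : ℝ) / ((k : ℝ) + 1) := by
    intro m
    induction m with
    | zero => norm_num
    | succ p ih =>
      rw [Finset.sum_range_succ (fun k => (k : ℝ) * (1 / (k : ℝ) - 1 / ((k : ℝ) + 1))),
        Finset.sum_range_succ (fun k => (1 : ℝ) / ((k : ℝ) + 1))]
      have hterm : ((p + 1 : ℕ) : ℝ) * (1 / ((p + 1 : ℕ) : ℝ) - 1 / (((p + 1 : ℕ) : ℝ) + 1))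
          = 1 / (((p + 1 : ℕ) : ℝ) + 1) := by
        have hp : ((p : ℝ) + 1) ≠ 0 := by positivity
        push_cast
        field_simp
        ring
      rw [hterm]
      linarith
  -- main identity
  have hmain : ∀ n : ℕ, 1 ≤ n → partialSum K Set.univ n - c * Real.log n
      = c * ((∑ k ∈ Finset.range n, (1 : ℝ) / ((k : ℝ) + 1)) - Real.log n)
        + E n / n + ∑ k ∈ Finset.range n, u k := by
    intro n hn
    have hn0 : ((n : ℝ)) ≠ 0 := by
      have : (0:ℝ) < n := by exact_mod_cast hn
      linarith
    have hHn : H n / n = c + E n / n := by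
      have : H n = c * n + E n := by rw [hEdef]; ring
      rw [this]; field_simp
    have hsplit : ∀ k : ℕ, H k * (1 / (k : ℝ) - 1 / ((k : ℝ) + 1))
        = c * ((k : ℝ) * (1 / (k : ℝ) - 1 / ((k : ℝ) + 1))) + u k := by
      intro k; rw [hudef, hEdef]; ring
    obtain ⟨m, rfl⟩ : ∃ m, n = m + 1 := ⟨n - 1, by omega⟩
    rw [habel (m + 1), hHn, Finset.sum_congr rfl (fun k _ => hsplit k), Finset.sum_add_distrib,
      ← Finset.mul_sum, ← hkey m]
    ring
  -- assemble
  have hD : Tendsto (fun n : ℕ => partialSum K Set.univ n - c * Real.log n) atTop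
      (𝓝 (c * Real.eulerMascheroniConstant + 0 + ∑' k, u k)) := by
    refine (((hharm.const_mul c).add hEx).add hT).congr' ?_
    filter_upwards [eventually_ge_atTop 1] with n hn
    exact (hmain n hn).symm
  have h1 : (fun n : ℕ => partialSum K Set.univ n - c * Real.log n) =O[atTop]
      (fun _ : ℕ => (1 : ℝ)) := hD.isBigO_one ℝ
  have h2' : (fun _ : ℕ => (1 : ℝ)) =o[atTop] fun n : ℕ => c * Real.log n := by
    refine isLittleO_const_left.2 (Or.inr ?_)
    have hlog : Tendsto (fun n : ℕ => c * Real.log n) atTop atTop :=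
      (Real.tendsto_log_atTop.comp tendsto_natCast_atTop_atTop).const_mul_atTop hc
    exact tendsto_abs_atTop_atTop.comp hlog
  exact h1.trans_isLittleO h2'
end

section
/- With the prime ideals of O_K enumerated as p_1, p_2, … in order of non-decreasing norm, and B_k := Π_k^{-1} Σ_{b'} 1/N(b') where b' ranges over the p_1,…,p_k-ideals that are multiples of some a ∈ 𝒜 and Π_k = Π_{i=1}^k (1-1/N(p_i))^{-1}, the sequence (B_k) is non-decreasing and bounded above by 1, hence converges. -/
set_option linter.unusedSectionVars false
set_option linter.unusedVariables false


open Filter Topology NumberField Asymptotics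

/-- A non-zero integral ideal all of whose prime factors lie in the set `P`. -/
def IsSmoothIdeal (K : Type*) [Field K] [NumberField K]
    (P : Set (Ideal (𝓞 K))) (n : Ideal (𝓞 K)) : Prop :=
  n ≠ ⊥ ∧ ∀ q : Ideal (𝓞 K), q.IsPrime → q ≠ ⊥ → n ≤ q → q ∈ P

/-- `B_k = Π_k⁻¹ · ∑ 1/N(b′)`, the sum ranging over the `p_0,…,p_{k-1}`-ideals that are
multiples of some member of `𝒜`, where `Π_k = ∏_{i<k} (1 - 1/N(p_i))⁻¹`. -/
noncomputable def multB (K : Type*) [Field K] [NumberField K]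
    (𝒜 : Set (Ideal (𝓞 K))) (p : ℕ → Ideal (𝓞 K)) (k : ℕ) : ℝ :=
  (∏ i ∈ Finset.range k, (1 - ((Ideal.absNorm (p i) : ℝ))⁻¹)⁻¹)⁻¹ *
    ∑' b : {b : Ideal (𝓞 K) //
        IsSmoothIdeal K (p '' Set.Iio k) b ∧ ∃ a ∈ 𝒜, b ≤ a},
      ((Ideal.absNorm (b : Ideal (𝓞 K)) : ℝ))⁻¹

section AuxMultB

open scoped ENNReal

set_option synthInstance.maxHeartbeats 400000 in
/-- auxiliary: reciprocal norm in `ℝ≥0∞`. -/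
noncomputable def auxFF {K : Type*} [Field K] [NumberField K] (b : Ideal (𝓞 K)) : ℝ≥0∞ :=
  (Ideal.absNorm b : ℝ≥0∞)⁻¹

/-- auxiliary: sum of reciprocal norms over a set of ideals, in `ℝ≥0∞`. -/
noncomputable def auxEE {K : Type*} [Field K] [NumberField K] (W : Set (Ideal (𝓞 K))) : ℝ≥0∞ :=
  ∑' b : W, auxFF (b : Ideal (𝓞 K))

variable {K : Type*} [Field K] [NumberField K] (p : ℕ → Ideal (𝓞 K))

set_option synthInstance.maxHeartbeats 400000

lemma aux_normTwo (hp : ∀ n, (p n).IsPrime) (hp0 : ∀ n, p n ≠ ⊥) (k : ℕ) :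
    2 ≤ Ideal.absNorm (p k) := by
  rcases Nat.lt_or_ge (Ideal.absNorm (p k)) 2 with h2 | h2
  · interval_cases h' : Ideal.absNorm (p k)
    · exact absurd (Ideal.absNorm_eq_zero_iff.mp h') (hp0 k)
    · exact absurd (Ideal.absNorm_eq_one_iff.mp h') (hp k).ne_top
  · exact h2

lemma aux_image_succ (k : ℕ) :
    p '' Set.Iio (k + 1) = insert (p k) (p '' Set.Iio k) := by
  rw [show Set.Iio (k + 1) = insert k (Set.Iio k) by
    ext n; simp only [Set.mem_Iio, Set.mem_insert_iff]; omega, Set.image_insert_eq]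

lemma aux_not_dvd (hinj : Function.Injective p) {k : ℕ} {b : Ideal (𝓞 K)}
    (hb : IsSmoothIdeal K (p '' Set.Iio k) b) (hpk : (p k).IsPrime) (hpk0 : p k ≠ ⊥) :
    ¬ p k ∣ b := by
  intro hdvd
  obtain ⟨i, hi, hip⟩ := hb.2 (p k) hpk hpk0 (Ideal.dvd_iff_le.mp hdvd)
  exact absurd (hinj hip) (Set.mem_Iio.mp hi).ne

lemma aux_exists_decomp (hp : ∀ n, (p n).IsPrime) (hp0 : ∀ n, p n ≠ ⊥) (k : ℕ) :
    ∀ n b, Ideal.absNorm b = n → IsSmoothIdeal K (p '' Set.Iio (k + 1)) b →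
      ∃ j c, IsSmoothIdeal K (p '' Set.Iio k) c ∧ b = p k ^ j * c := by
  intro n
  induction n using Nat.strong_induction_on with
  | _ n ih =>
    intro b hn hb
    by_cases hdvd : p k ∣ b
    · obtain ⟨c, rfl⟩ := hdvd
      have hc0 : c ≠ ⊥ := by
        rintro rfl
        exact hb.1 (by rw [Ideal.mul_bot])
      have hcs : IsSmoothIdeal K (p '' Set.Iio (k + 1)) c := by
        refine ⟨hc0, fun q hq hq0 hle => hb.2 q hq hq0 ?_⟩
        exact Ideal.dvd_iff_le.mp ((Ideal.dvd_iff_le.mpr hle).mul_left _)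
      have hcn : Ideal.absNorm c < n := by
        subst hn
        rw [map_mul]
        have h2 := aux_normTwo p hp hp0 k
        have hcpos : 0 < Ideal.absNorm c :=
          Nat.pos_of_ne_zero fun h => hc0 (Ideal.absNorm_eq_zero_iff.mp h)
        calc Ideal.absNorm c < 2 * Ideal.absNorm c := by omega
          _ ≤ _ := Nat.mul_le_mul_right _ h2
      obtain ⟨j, c', hc', rfl⟩ := ih _ hcn c rfl hcs
      exact ⟨j + 1, c', hc', by ring⟩
    · refine ⟨0, b, ⟨hb.1, fun q hq hq0 hle => ?_⟩, by rw [pow_zero, one_mul]⟩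
      have hmem := hb.2 q hq hq0 hle
      rw [aux_image_succ] at hmem
      rcases Set.mem_insert_iff.mp hmem with h | h
      · exact absurd (Ideal.dvd_iff_le.mpr (h ▸ hle)) hdvd
      · exact h

lemma aux_smooth_of_decomp (hp : ∀ n, (p n).IsPrime) (hp0 : ∀ n, p n ≠ ⊥)
    {k j : ℕ} {c : Ideal (𝓞 K)} (hc : IsSmoothIdeal K (p '' Set.Iio k) c) :
    IsSmoothIdeal K (p '' Set.Iio (k + 1)) (p k ^ j * c) := by
  have hpk0' : (p k : Ideal (𝓞 K)) ≠ 0 := by rw [Ideal.zero_eq_bot]; exact hp0 k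
  have hc0' : c ≠ 0 := by rw [Ideal.zero_eq_bot]; exact hc.1
  have h0 : p k ^ j * c ≠ 0 := mul_ne_zero (pow_ne_zero _ hpk0') hc0'
  refine ⟨by rw [← Ideal.zero_eq_bot]; exact h0, fun q hq hq0 hle => ?_⟩
  have hqp : Prime q := Ideal.prime_of_isPrime hq0 hq
  rw [aux_image_succ]
  rcases hqp.dvd_mul.mp (Ideal.dvd_iff_le.mpr hle) with h | h
  · have hqd : q ∣ p k := hqp.dvd_of_dvd_pow h
    have hmax : (p k).IsMaximal := Ideal.IsPrime.isMaximal (hp k) (hp0 k)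
    exact Set.mem_insert_iff.mpr
      (Or.inl (hmax.eq_of_le hq.ne_top (Ideal.dvd_iff_le.mp hqd)).symm)
  · exact Set.mem_insert_of_mem _ (hc.2 q hq hq0 (Ideal.dvd_iff_le.mp h))

lemma aux_decomp_inj (hp : ∀ n, (p n).IsPrime) (hp0 : ∀ n, p n ≠ ⊥)
    (hinj : Function.Injective p) {k j j' : ℕ} {c c' : Ideal (𝓞 K)}
    (hc : IsSmoothIdeal K (p '' Set.Iio k) c) (hc' : IsSmoothIdeal K (p '' Set.Iio k) c')
    (h : p k ^ j * c = p k ^ j' * c') : j = j' ∧ c = c' := by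
  have hpk0' : (p k : Ideal (𝓞 K)) ≠ 0 := by rw [Ideal.zero_eq_bot]; exact hp0 k
  have key : ∀ {a a' : ℕ} {d d' : Ideal (𝓞 K)}, a ≤ a' →
      IsSmoothIdeal K (p '' Set.Iio k) d → IsSmoothIdeal K (p '' Set.Iio k) d' →
      p k ^ a * d = p k ^ a' * d' → a = a' ∧ d = d' := by
    intro a a' d d' hle hd hd' heq
    obtain ⟨m, rfl⟩ := Nat.exists_eq_add_of_le hle
    rw [pow_add, mul_assoc] at heq
    have hd2 : d = p k ^ m * d' := mul_left_cancel₀ (pow_ne_zero _ hpk0') heq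
    rcases Nat.eq_zero_or_pos m with rfl | hm
    · rw [pow_zero, one_mul] at hd2
      exact ⟨by omega, hd2⟩
    · exfalso
      have hdvd : p k ∣ p k ^ m * d' := dvd_mul_of_dvd_left (dvd_pow_self _ hm.ne') d'
      rw [← hd2] at hdvd
      exact aux_not_dvd p hinj hd (hp k) (hp0 k) hdvd
  rcases le_total j j' with hle | hle
  · exact key hle hc hc' h
  · obtain ⟨h1, h2⟩ := key hle hc' hc h.symm
    exact ⟨h1.symm, h2.symm⟩

lemma auxEE_mono {W W' : Set (Ideal (𝓞 K))} (h : W ⊆ W') : auxEE W ≤ auxEE W' :=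
  Summable.tsum_le_tsum_of_inj (Set.inclusion h) (Set.inclusion_injective h)
    (fun _ _ => zero_le) (fun _ => le_rfl) ENNReal.summable ENNReal.summable

lemma auxEE_step (hp : ∀ n, (p n).IsPrime) (hp0 : ∀ n, p n ≠ ⊥)
    (hinj : Function.Injective p) {k : ℕ} {W : Set (Ideal (𝓞 K))}
    (hW : ∀ b ∈ W, IsSmoothIdeal K (p '' Set.Iio k) b) :
    auxEE {b : Ideal (𝓞 K) | ∃ j c, c ∈ W ∧ b = p k ^ j * c}
      = (1 - (Ideal.absNorm (p k) : ℝ≥0∞)⁻¹)⁻¹ * auxEE W := by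
  have h2 : 2 ≤ Ideal.absNorm (p k) := aux_normTwo p hp hp0 k
  set r : ℝ≥0∞ := (Ideal.absNorm (p k) : ℝ≥0∞)⁻¹ with hr
  set W' : Set (Ideal (𝓞 K)) := {b | ∃ j c, c ∈ W ∧ b = p k ^ j * c} with hW'
  let e : (ℕ × W) → W' := fun x => ⟨p k ^ x.1 * (x.2 : Ideal (𝓞 K)), ⟨x.1, x.2, x.2.2, rfl⟩⟩
  have hbij : Function.Bijective e := by
    constructor
    · rintro ⟨j, c⟩ ⟨j', c'⟩ hx
      obtain ⟨h1, h2'⟩ := aux_decomp_inj p hp hp0 hinj (hW c c.2) (hW c' c'.2)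
        (congrArg Subtype.val hx)
      simp only [Prod.mk.injEq]
      exact ⟨h1, Subtype.ext h2'⟩
    · rintro ⟨b, j, c, hc, rfl⟩
      exact ⟨(j, ⟨c, hc⟩), rfl⟩
  have key := (Equiv.ofBijective e hbij).tsum_eq (fun b : W' => auxFF (b : Ideal (𝓞 K)))
  have hterm : ∀ (j : ℕ) (c : Ideal (𝓞 K)), c ∈ W →
      auxFF (p k ^ j * c) = r ^ j * auxFF c := by
    intro j c hc
    have hc0 : Ideal.absNorm c ≠ 0 := fun h => (hW c hc).1 (Ideal.absNorm_eq_zero_iff.mp h)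
    have hN0 : ((Ideal.absNorm (p k) : ℝ≥0∞)) ≠ 0 := Nat.cast_ne_zero.mpr (by omega)
    unfold auxFF
    rw [map_mul, map_pow, Nat.cast_mul, Nat.cast_pow,
      ENNReal.mul_inv (Or.inl (pow_ne_zero _ hN0))
        (Or.inl (ENNReal.pow_ne_top (ENNReal.natCast_ne_top _))),
      ENNReal.inv_pow]
  calc auxEE W' = ∑' x : ℕ × W, auxFF (p k ^ x.1 * (x.2 : Ideal (𝓞 K))) := key.symm
    _ = ∑' x : ℕ × W, r ^ x.1 * auxFF (x.2 : Ideal (𝓞 K)) :=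
        tsum_congr fun x => hterm x.1 x.2 x.2.2
    _ = ∑' j : ℕ, ∑' c : W, r ^ j * auxFF (c : Ideal (𝓞 K)) :=
        ENNReal.tsum_prod (f := fun j (c : W) => r ^ j * auxFF (c : Ideal (𝓞 K)))
    _ = (∑' j : ℕ, r ^ j) * auxEE W := by
        simp only [ENNReal.tsum_mul_left]
        rw [ENNReal.tsum_mul_right]
        rfl
    _ = (1 - r)⁻¹ * auxEE W := by rw [ENNReal.tsum_geometric]

lemma aux_Sm_zero :
    {b : Ideal (𝓞 K) | IsSmoothIdeal K (p '' Set.Iio 0) b} = {⊤} := by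
  ext b
  simp only [Set.mem_setOf_eq, Set.mem_singleton_iff]
  constructor
  · rintro ⟨hb0, hb⟩
    by_contra hne
    obtain ⟨M, hM, hle⟩ := Ideal.exists_le_maximal b hne
    have hM0 : M ≠ ⊥ := fun h => hb0 (le_bot_iff.mp (h ▸ hle))
    obtain ⟨i, hi, -⟩ := hb M hM.isPrime hM0 hle
    exact Nat.not_lt_zero i hi
  · rintro rfl
    refine ⟨fun h => ?_, fun q hq hq0 hle => absurd (top_le_iff.mp hle) hq.ne_top⟩
    have h1 : (1 : 𝓞 K) ∈ (⊥ : Ideal (𝓞 K)) := h ▸ trivial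
    exact one_ne_zero (Ideal.mem_bot.mp h1)

lemma auxEE_Sm (hp : ∀ n, (p n).IsPrime) (hp0 : ∀ n, p n ≠ ⊥)
    (hinj : Function.Injective p) (k : ℕ) :
    auxEE {b : Ideal (𝓞 K) | IsSmoothIdeal K (p '' Set.Iio k) b}
      = ∏ i ∈ Finset.range k, (1 - (Ideal.absNorm (p i) : ℝ≥0∞)⁻¹)⁻¹ := by
  induction k with
  | zero =>
    rw [aux_Sm_zero]
    unfold auxEE
    rw [tsum_singleton]
    unfold auxFF
    rw [Ideal.absNorm_top]
    simp
  | succ k ih =>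
    have hset : {b : Ideal (𝓞 K) | IsSmoothIdeal K (p '' Set.Iio (k + 1)) b}
        = {b : Ideal (𝓞 K) | ∃ j c,
            c ∈ {b : Ideal (𝓞 K) | IsSmoothIdeal K (p '' Set.Iio k) b} ∧ b = p k ^ j * c} := by
      ext b
      constructor
      · intro hb
        exact aux_exists_decomp p hp hp0 k _ b rfl hb
      · rintro ⟨j, c, hc, rfl⟩
        exact aux_smooth_of_decomp p hp hp0 hc
    rw [hset, auxEE_step p hp hp0 hinj
      (k := k) (W := {b : Ideal (𝓞 K) | IsSmoothIdeal K (p '' Set.Iio k) b}) (fun b hb => hb), ih,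
      Finset.prod_range_succ, mul_comm]

lemma aux_prod_ne_top (hp : ∀ n, (p n).IsPrime) (hp0 : ∀ n, p n ≠ ⊥) (k : ℕ) :
    ∏ i ∈ Finset.range k, (1 - (Ideal.absNorm (p i) : ℝ≥0∞)⁻¹)⁻¹ ≠ ⊤ := by
  refine (ENNReal.prod_lt_top fun i _ => ?_).ne
  have h2 : 2 ≤ Ideal.absNorm (p i) := aux_normTwo p hp hp0 i
  have hr : (Ideal.absNorm (p i) : ℝ≥0∞)⁻¹ < 1 := by
    rw [ENNReal.inv_lt_one]
    exact_mod_cast Nat.lt_of_lt_of_le one_lt_two h2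
  rw [lt_top_iff_ne_top, ENNReal.inv_ne_top]
  exact (tsub_pos_iff_lt.mpr hr).ne'

lemma aux_real_tsum_eq (W : Set (Ideal (𝓞 K))) (hW : ∀ b ∈ W, b ≠ ⊥) :
    ∑' b : W, ((Ideal.absNorm (b : Ideal (𝓞 K)) : ℝ))⁻¹ = (auxEE W).toReal := by
  have h1 : ∀ b : W, auxFF (b : Ideal (𝓞 K)) ≠ ⊤ := by
    intro b
    unfold auxFF
    rw [ENNReal.inv_ne_top]
    have : Ideal.absNorm (b : Ideal (𝓞 K)) ≠ 0 :=
      fun h => hW b b.2 (Ideal.absNorm_eq_zero_iff.mp h)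
    exact_mod_cast this
  rw [auxEE, ENNReal.tsum_toReal_eq h1]
  exact tsum_congr fun b => by rw [auxFF, ENNReal.toReal_inv, ENNReal.toReal_natCast]

end AuxMultB

section AuxMultB2

open scoped ENNReal

variable {K : Type*} [Field K] [NumberField K] (p : ℕ → Ideal (𝓞 K))

set_option synthInstance.maxHeartbeats 400000
set_option maxHeartbeats 1000000

lemma aux_factor_ne_top (hp : ∀ n, (p n).IsPrime) (hp0 : ∀ n, p n ≠ ⊥) (i : ℕ) :
    (1 - (Ideal.absNorm (p i) : ℝ≥0∞)⁻¹)⁻¹ ≠ ⊤ := by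
  have h2 : 2 ≤ Ideal.absNorm (p i) := aux_normTwo p hp hp0 i
  have hr : (Ideal.absNorm (p i) : ℝ≥0∞)⁻¹ < 1 := by
    rw [ENNReal.inv_lt_one]
    exact_mod_cast Nat.lt_of_lt_of_le one_lt_two h2
  rw [ENNReal.inv_ne_top]
  exact (tsub_pos_iff_lt.mpr hr).ne'

end AuxMultB2

/-- with the primes enumerated in non-decreasing order of norm, the
sequence `B_k` is non-decreasing and bounded above by `1`, hence converges. -/
theorem multB_monotone_bounded (K : Type*) [Field K] [NumberField K]
    (𝒜 : Set (Ideal (𝓞 K))) (h𝒜 : ∀ a ∈ 𝒜, a ≠ ⊥) (h𝒜c : 𝒜.Countable)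
    (p : ℕ → Ideal (𝓞 K)) (hp : ∀ n, (p n).IsPrime) (hp0 : ∀ n, p n ≠ ⊥)
    (hinj : Function.Injective p)
    (hmono : Monotone fun n => Ideal.absNorm (p n))
    (hsurj : ∀ q : Ideal (𝓞 K), q.IsPrime → q ≠ ⊥ → ∃ n, p n = q) :
    Monotone (multB K 𝒜 p) ∧ (∀ k, multB K 𝒜 p k ≤ 1) ∧
      ∃ B : ℝ, Tendsto (multB K 𝒜 p) atTop (𝓝 B) := by
  classical
  open scoped ENNReal in
  have h2 : ∀ i, 2 ≤ Ideal.absNorm (p i) := aux_normTwo p hp hp0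
  set S : ℕ → Set (Ideal (𝓞 K)) :=
    fun k => {b : Ideal (𝓞 K) | IsSmoothIdeal K (p '' Set.Iio k) b ∧ ∃ a ∈ 𝒜, b ≤ a} with hSdef
  have hfac : ∀ i : ℕ, 0 < 1 - ((Ideal.absNorm (p i) : ℝ))⁻¹ := by
    intro i
    have hN1 : (1 : ℝ) < (Ideal.absNorm (p i) : ℝ) := by
      exact_mod_cast Nat.lt_of_lt_of_le one_lt_two (h2 i)
    have hNpos : (0 : ℝ) < (Ideal.absNorm (p i) : ℝ) := by linarith
    have hinv : ((Ideal.absNorm (p i) : ℝ))⁻¹ * (Ideal.absNorm (p i) : ℝ) = 1 :=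
      inv_mul_cancel₀ hNpos.ne'
    nlinarith [inv_nonneg.mpr hNpos.le]
  set Pi : ℕ → ℝ :=
    fun k => ∏ i ∈ Finset.range k, (1 - ((Ideal.absNorm (p i) : ℝ))⁻¹)⁻¹ with hPidef
  have hPipos : ∀ k, 0 < Pi k := fun k => Finset.prod_pos fun i _ => inv_pos.mpr (hfac i)
  have hfacE : ∀ i : ℕ, ((1 - (Ideal.absNorm (p i) : ENNReal)⁻¹)⁻¹).toReal
      = (1 - ((Ideal.absNorm (p i) : ℝ))⁻¹)⁻¹ := by
    intro i
    have hle : (Ideal.absNorm (p i) : ENNReal)⁻¹ ≤ 1 :=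
      ENNReal.inv_le_one.mpr (Nat.one_le_cast.mpr (by have := h2 i; omega))
    rw [ENNReal.toReal_inv, ENNReal.toReal_sub_of_le hle ENNReal.one_ne_top, ENNReal.toReal_one,
      ENNReal.toReal_inv, ENNReal.toReal_natCast]
  have hPiE : ∀ k, (∏ i ∈ Finset.range k,
      (1 - (Ideal.absNorm (p i) : ENNReal)⁻¹)⁻¹).toReal = Pi k := by
    intro k
    rw [ENNReal.toReal_prod]
    exact Finset.prod_congr rfl fun i _ => hfacE i
  have hEle : ∀ k, auxEE (S k) ≤ ∏ i ∈ Finset.range k,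
      (1 - (Ideal.absNorm (p i) : ENNReal)⁻¹)⁻¹ := by
    intro k
    calc auxEE (S k) ≤ auxEE {b : Ideal (𝓞 K) | IsSmoothIdeal K (p '' Set.Iio k) b} :=
          auxEE_mono fun b hb => hb.1
      _ = _ := auxEE_Sm p hp hp0 hinj k
  have hEfin : ∀ k, auxEE (S k) ≠ ⊤ :=
    fun k => ne_top_of_le_ne_top (aux_prod_ne_top p hp hp0 k) (hEle k)
  have hT : ∀ k, (∑' b : {b : Ideal (𝓞 K) //
        IsSmoothIdeal K (p '' Set.Iio k) b ∧ ∃ a ∈ 𝒜, b ≤ a},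
      ((Ideal.absNorm (b : Ideal (𝓞 K)) : ℝ))⁻¹) = (auxEE (S k)).toReal :=
    fun k => aux_real_tsum_eq (S k) fun b hb => hb.1.1
  have hmulB : ∀ k, multB K 𝒜 p k = (Pi k)⁻¹ * (auxEE (S k)).toReal := by
    intro k
    show (∏ i ∈ Finset.range k, (1 - ((Ideal.absNorm (p i) : ℝ))⁻¹)⁻¹)⁻¹ *
      (∑' b : {b : Ideal (𝓞 K) //
        IsSmoothIdeal K (p '' Set.Iio k) b ∧ ∃ a ∈ 𝒜, b ≤ a},
      ((Ideal.absNorm (b : Ideal (𝓞 K)) : ℝ))⁻¹) = _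
    rw [hT k]
  have hbound : ∀ k, multB K 𝒜 p k ≤ 1 := by
    intro k
    rw [hmulB k]
    have hle : (auxEE (S k)).toReal ≤ Pi k := by
      rw [← hPiE k]
      exact ENNReal.toReal_mono (aux_prod_ne_top p hp hp0 k) (hEle k)
    calc (Pi k)⁻¹ * (auxEE (S k)).toReal ≤ (Pi k)⁻¹ * Pi k :=
        mul_le_mul_of_nonneg_left hle (inv_nonneg.mpr (hPipos k).le)
      _ = 1 := inv_mul_cancel₀ (hPipos k).ne'
  have hstep : ∀ k, multB K 𝒜 p k ≤ multB K 𝒜 p (k + 1) := by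
    intro k
    have hkey : (1 - (Ideal.absNorm (p k) : ENNReal)⁻¹)⁻¹ * auxEE (S k)
        ≤ auxEE (S (k + 1)) := by
      rw [← auxEE_step p hp hp0 hinj (k := k) (W := S k) (fun b hb => hb.1)]
      refine auxEE_mono ?_
      rintro b ⟨j, c, ⟨hcs, a, ha, hca⟩, rfl⟩
      exact ⟨aux_smooth_of_decomp p hp hp0 hcs, a, ha, le_trans Ideal.mul_le_right hca⟩
    have hreal : (1 - ((Ideal.absNorm (p k) : ℝ))⁻¹)⁻¹ * (auxEE (S k)).toReal
        ≤ (auxEE (S (k + 1))).toReal := by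
      have h := ENNReal.toReal_mono (hEfin (k + 1)) hkey
      rwa [ENNReal.toReal_mul, hfacE k] at h
    set c : ℝ := 1 - ((Ideal.absNorm (p k) : ℝ))⁻¹ with hcdef
    have hc : 0 < c := hfac k
    have h4 : (auxEE (S k)).toReal ≤ c * (auxEE (S (k + 1))).toReal := by
      have h := mul_le_mul_of_nonneg_left hreal hc.le
      rwa [← mul_assoc, mul_inv_cancel₀ hc.ne', one_mul] at h
    rw [hmulB k, hmulB (k + 1)]
    have hPisucc : Pi (k + 1) = Pi k * c⁻¹ := Finset.prod_range_succ _ _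
    rw [hPisucc, mul_inv, inv_inv]
    calc (Pi k)⁻¹ * (auxEE (S k)).toReal
        ≤ (Pi k)⁻¹ * (c * (auxEE (S (k + 1))).toReal) :=
          mul_le_mul_of_nonneg_left h4 (inv_nonneg.mpr (hPipos k).le)
      _ = (Pi k)⁻¹ * c * (auxEE (S (k + 1))).toReal := (mul_assoc _ _ _).symm
  have hmono' : Monotone (multB K 𝒜 p) := monotone_nat_of_le_succ hstep
  refine ⟨hmono', hbound, ⟨⨆ k, multB K 𝒜 p k, tendsto_atTop_ciSup hmono' ⟨1, ?_⟩⟩⟩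
  rintro x ⟨k, rfl⟩
  exact hbound k
end

section
/- Let p_1,…,p_h be prime ideals of O_K with k ≤ h, and let 𝒜 be a set of non-zero integral ideals. Let b* range over the p_1,…,p_h-ideals that are multiples of some member of 𝒜 but are not multiples of any p_1,…,p_k-ideal belonging to 𝒜. Then Σ_{b*} 1/N(b*) = Π_h (B_h - B_k), where Π_j = Π_{i=1}^j (1-1/N(p_i))^{-1} and B_j = Π_j^{-1} Σ 1/N(b') with b' ranging over p_1,…,p_j-ideals that are multiples of some member of 𝒜. -/
open Filter Topology NumberField Asymptotics

section aux

open UniqueFactorizationMonoid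

variable {K : Type*} [Field K] [NumberField K]

lemma isSmoothIdeal_iff {P : Set (Ideal (𝓞 K))} {n : Ideal (𝓞 K)} :
    IsSmoothIdeal K P n ↔ n ≠ 0 ∧ ∀ q : Ideal (𝓞 K), Prime q → q ∣ n → q ∈ P := by
  rw [IsSmoothIdeal, Submodule.zero_eq_bot]
  refine and_congr Iff.rfl ⟨fun H q hq hdvd => ?_, fun H q hq hq0 hle => ?_⟩
  · exact H q (Ideal.isPrime_of_prime hq) hq.ne_zero (Ideal.le_of_dvd hdvd)
  · exact H q (Ideal.prime_of_isPrime hq0 hq) (Ideal.dvd_iff_le.mpr hle)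

lemma IsSmoothIdeal.ne_zero {P : Set (Ideal (𝓞 K))} {n : Ideal (𝓞 K)}
    (h : IsSmoothIdeal K P n) : n ≠ 0 := (isSmoothIdeal_iff.mp h).1

lemma IsSmoothIdeal.mul {P Q : Set (Ideal (𝓞 K))} {b c : Ideal (𝓞 K)}
    (hb : IsSmoothIdeal K P b) (hc : IsSmoothIdeal K Q c) :
    IsSmoothIdeal K (P ∪ Q) (b * c) := by
  rw [isSmoothIdeal_iff] at *
  refine ⟨mul_ne_zero hb.1 hc.1, fun q hq hdvd => ?_⟩
  rcases hq.dvd_mul.mp hdvd with h | h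
  · exact Or.inl (hb.2 q hq h)
  · exact Or.inr (hc.2 q hq h)

lemma IsSmoothIdeal.of_dvd {P : Set (Ideal (𝓞 K))} {a b : Ideal (𝓞 K)}
    (hb : IsSmoothIdeal K P b) (hab : a ∣ b) (ha : a ≠ 0) : IsSmoothIdeal K P a := by
  rw [isSmoothIdeal_iff] at *
  exact ⟨ha, fun q hq hdvd => hb.2 q hq (hdvd.trans hab)⟩

lemma IsSmoothIdeal.isRelPrime {P Q : Set (Ideal (𝓞 K))} {a c : Ideal (𝓞 K)}
    (ha : IsSmoothIdeal K P a) (hc : IsSmoothIdeal K Q c) (hPQ : Disjoint P Q) :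
    IsRelPrime a c := by
  intro d hda hdc
  by_contra hU
  have hd0 : d ≠ 0 := fun h => ha.ne_zero (zero_dvd_iff.mp (h ▸ hda))
  obtain ⟨r, hr⟩ := UniqueFactorizationMonoid.exists_mem_factors hd0 hU
  have hrp := UniqueFactorizationMonoid.prime_of_factor r hr
  have h1 : r ∈ P :=
    (isSmoothIdeal_iff.mp ha).2 r hrp ((UniqueFactorizationMonoid.dvd_of_mem_factors hr).trans hda)
  have h2 : r ∈ Q :=
    (isSmoothIdeal_iff.mp hc).2 r hrp ((UniqueFactorizationMonoid.dvd_of_mem_factors hr).trans hdc)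
  exact Set.disjoint_left.mp hPQ h1 h2

lemma smooth_mul_inj {P Q : Set (Ideal (𝓞 K))} {b₁ c₁ b₂ c₂ : Ideal (𝓞 K)}
    (hPQ : Disjoint P Q)
    (hb₁ : IsSmoothIdeal K P b₁) (hc₁ : IsSmoothIdeal K Q c₁)
    (hb₂ : IsSmoothIdeal K P b₂) (hc₂ : IsSmoothIdeal K Q c₂)
    (heq : b₁ * c₁ = b₂ * c₂) : b₁ = b₂ ∧ c₁ = c₂ := by
  have h12 : b₁ ∣ b₂ :=
    (hb₁.isRelPrime hc₂ hPQ).dvd_of_dvd_mul_right (by rw [← heq]; exact dvd_mul_right b₁ c₁)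
  have h21 : b₂ ∣ b₁ :=
    (hb₂.isRelPrime hc₁ hPQ).dvd_of_dvd_mul_right (by rw [heq]; exact dvd_mul_right b₂ c₂)
  have hb : b₁ = b₂ := associated_iff_eq.mp (associated_of_dvd_dvd h12 h21)
  subst hb
  exact ⟨rfl, mul_left_cancel₀ hb₁.ne_zero heq⟩

lemma isSmoothIdeal_multiset_prod {R : Set (Ideal (𝓞 K))} (t : Multiset (Ideal (𝓞 K)))
    (ht : ∀ r ∈ t, Prime r ∧ r ∈ R) : IsSmoothIdeal K R t.prod := by
  rw [isSmoothIdeal_iff]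
  constructor
  · exact Multiset.prod_ne_zero fun h0 => (ht 0 h0).1.ne_zero rfl
  · intro q hq hdvd
    obtain ⟨r, hrt, hqr⟩ := hq.exists_mem_multiset_dvd hdvd
    have : q = r := associated_iff_eq.mp (hq.associated_of_dvd (ht r hrt).1 hqr)
    exact this ▸ (ht r hrt).2

lemma isSmoothIdeal_split {P Q : Set (Ideal (𝓞 K))} {b : Ideal (𝓞 K)}
    (hb : IsSmoothIdeal K (P ∪ Q) b) :
    ∃ b' c, IsSmoothIdeal K P b' ∧ IsSmoothIdeal K Q c ∧ b = b' * c := by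
  classical
  obtain ⟨h0, hs⟩ := isSmoothIdeal_iff.mp hb
  refine ⟨((normalizedFactors b).filter (· ∈ P)).prod,
    ((normalizedFactors b).filter (fun r => ¬ r ∈ P)).prod, ?_, ?_, ?_⟩
  · refine isSmoothIdeal_multiset_prod _ fun r hr => ?_
    rw [Multiset.mem_filter] at hr
    exact ⟨prime_of_normalized_factor r hr.1, hr.2⟩
  · refine isSmoothIdeal_multiset_prod _ fun r hr => ?_
    rw [Multiset.mem_filter] at hr
    refine ⟨prime_of_normalized_factor r hr.1, ?_⟩
    have := hs r (prime_of_normalized_factor r hr.1) (dvd_of_mem_normalizedFactors hr.1)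
    exact this.resolve_left hr.2
  · rw [Multiset.prod_filter_mul_prod_filter_not]
    exact (associated_iff_eq.mp (prod_normalizedFactors h0)).symm

set_option maxHeartbeats 1000000 in
lemma hasSum_mul_set {P Q : Set (Ideal (𝓞 K))} (hPQ : Disjoint P Q)
    {S T U : Set (Ideal (𝓞 K))} {x y : ℝ}
    (hSP : ∀ b ∈ S, IsSmoothIdeal K P b) (hTQ : ∀ c ∈ T, IsSmoothIdeal K Q c)
    (hmul : ∀ b ∈ S, ∀ c ∈ T, b * c ∈ U)
    (hsplit : ∀ u ∈ U, ∃ b ∈ S, ∃ c ∈ T, u = b * c)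
    (hx : HasSum (fun b : S => ((Ideal.absNorm (b : Ideal (𝓞 K)) : ℝ))⁻¹) x)
    (hy : HasSum (fun c : T => ((Ideal.absNorm (c : Ideal (𝓞 K)) : ℝ))⁻¹) y) :
    HasSum (fun u : U => ((Ideal.absNorm (u : Ideal (𝓞 K)) : ℝ))⁻¹) (x * y) := by
  have hmap : ∀ z : S × T, (z.1.1 * z.2.1) ∈ U := fun z => hmul _ z.1.2 _ z.2.2
  let e : S × T → U := fun z => ⟨z.1.1 * z.2.1, hmap z⟩
  have hbij : Function.Bijective e := by
    constructor
    · rintro ⟨⟨b₁, hb₁⟩, ⟨c₁, hc₁⟩⟩ ⟨⟨b₂, hb₂⟩, ⟨c₂, hc₂⟩⟩ hz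
      have : b₁ * c₁ = b₂ * c₂ := congrArg Subtype.val hz
      obtain ⟨h1, h2⟩ := smooth_mul_inj hPQ (hSP _ hb₁) (hTQ _ hc₁) (hSP _ hb₂) (hTQ _ hc₂) this
      simp [Prod.ext_iff, Subtype.ext_iff, h1, h2]
    · rintro ⟨u, hu⟩
      obtain ⟨b, hb, c, hc, rfl⟩ := hsplit u hu
      exact ⟨(⟨b, hb⟩, ⟨c, hc⟩), rfl⟩
  have key : HasSum (fun z : S × T =>
      ((Ideal.absNorm (z.1 : Ideal (𝓞 K)) : ℝ))⁻¹ * ((Ideal.absNorm (z.2 : Ideal (𝓞 K)) : ℝ))⁻¹)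
      (x * y) :=
    hx.mul hy (hx.summable.mul_of_nonneg hy.summable
      (fun _ => by positivity) (fun _ => by positivity))
  refine (Equiv.ofBijective e hbij).hasSum_iff.mp ?_
  have hfe : ((fun u : U => ((Ideal.absNorm (u : Ideal (𝓞 K)) : ℝ))⁻¹) ∘ (Equiv.ofBijective e hbij))
      = fun z : S × T =>
      ((Ideal.absNorm (z.1 : Ideal (𝓞 K)) : ℝ))⁻¹ * ((Ideal.absNorm (z.2 : Ideal (𝓞 K)) : ℝ))⁻¹ := by
    funext z
    show ((Ideal.absNorm ((z.1 : Ideal (𝓞 K)) * (z.2 : Ideal (𝓞 K))) : ℝ))⁻¹ = _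
    rw [map_mul]
    push_cast
    rw [mul_inv]
  rw [hfe]
  exact key


lemma two_le_absNorm {q : Ideal (𝓞 K)} (hq : Prime q) : 2 ≤ Ideal.absNorm q := by
  have h0 : Ideal.absNorm q ≠ 0 := by
    rw [Ne, Ideal.absNorm_eq_zero_iff]
    exact hq.ne_zero
  have h1 : Ideal.absNorm q ≠ 1 := by
    rw [Ne, Ideal.absNorm_eq_one_iff]
    intro h
    exact hq.not_unit (by rw [Ideal.isUnit_iff, h])
  omega

lemma hasSum_smooth_singleton {q : Ideal (𝓞 K)} (hq : Prime q) :
    HasSum (fun b : {b : Ideal (𝓞 K) // b ∈ {b : Ideal (𝓞 K) | IsSmoothIdeal K {q} b}} =>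
      ((Ideal.absNorm (b : Ideal (𝓞 K)) : ℝ))⁻¹)
      (1 - ((Ideal.absNorm q : ℝ))⁻¹)⁻¹ := by
  have hq2 : 2 ≤ Ideal.absNorm q := two_le_absNorm hq
  have hsm : ∀ n : ℕ, IsSmoothIdeal K {q} (q ^ n) := by
    intro n
    rw [isSmoothIdeal_iff]
    refine ⟨pow_ne_zero n hq.ne_zero, fun r hr hdvd => ?_⟩
    have : r ∣ q := hr.dvd_of_dvd_pow hdvd
    exact associated_iff_eq.mp (hr.associated_of_dvd hq this)
  let e : ℕ → {b : Ideal (𝓞 K) // b ∈ {b : Ideal (𝓞 K) | IsSmoothIdeal K {q} b}} :=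
    fun n => ⟨q ^ n, hsm n⟩
  have hbij : Function.Bijective e := by
    constructor
    · intro m n hmn
      have : q ^ m = q ^ n := congrArg Subtype.val hmn
      have hN : Ideal.absNorm q ^ m = Ideal.absNorm q ^ n := by
        rw [← map_pow, ← map_pow, this]
      exact Nat.pow_right_injective hq2 hN
    · rintro ⟨b, hb⟩
      obtain ⟨hb0, hbs⟩ := isSmoothIdeal_iff.mp hb
      have hrep : UniqueFactorizationMonoid.normalizedFactors b =
          Multiset.replicate (Multiset.card (UniqueFactorizationMonoid.normalizedFactors b)) q := by
        rw [Multiset.eq_replicate_card]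
        intro r hr
        exact hbs r (UniqueFactorizationMonoid.prime_of_normalized_factor r hr)
          (UniqueFactorizationMonoid.dvd_of_mem_normalizedFactors hr)
      refine ⟨Multiset.card (UniqueFactorizationMonoid.normalizedFactors b), ?_⟩
      apply Subtype.ext
      show q ^ _ = b
      rw [← Multiset.prod_replicate, ← hrep]
      exact associated_iff_eq.mp (UniqueFactorizationMonoid.prod_normalizedFactors hb0)
  refine (Equiv.ofBijective e hbij).hasSum_iff.mp ?_
  have h1 : (1 : ℝ) < (Ideal.absNorm q : ℝ) := by exact_mod_cast (by omega : 1 < Ideal.absNorm q)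
  have hgeo : HasSum (fun n : ℕ => ((Ideal.absNorm q : ℝ))⁻¹ ^ n)
      (1 - ((Ideal.absNorm q : ℝ))⁻¹)⁻¹ :=
    hasSum_geometric_of_lt_one (by positivity) (by
      rw [inv_lt_one_iff₀]
      exact Or.inr h1)
  have hfe : ((fun b : {b : Ideal (𝓞 K) // b ∈ {b : Ideal (𝓞 K) | IsSmoothIdeal K {q} b}} =>
      ((Ideal.absNorm (b : Ideal (𝓞 K)) : ℝ))⁻¹) ∘ (Equiv.ofBijective e hbij))
      = fun n : ℕ => ((Ideal.absNorm q : ℝ))⁻¹ ^ n := by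
    funext n
    show ((Ideal.absNorm (q ^ n) : ℝ))⁻¹ = _
    rw [map_pow]
    push_cast
    rw [inv_pow]
  rw [hfe]
  exact hgeo


lemma isSmoothIdeal_empty_iff {b : Ideal (𝓞 K)} :
    IsSmoothIdeal K (∅ : Set (Ideal (𝓞 K))) b ↔ b = 1 := by
  rw [isSmoothIdeal_iff]
  constructor
  · rintro ⟨h0, hs⟩
    by_contra hb1
    have hu : ¬IsUnit b := by
      rw [Ideal.isUnit_iff, ← Ideal.one_eq_top]
      exact hb1
    obtain ⟨r, hr⟩ := UniqueFactorizationMonoid.exists_mem_factors h0 hu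
    exact hs r (UniqueFactorizationMonoid.prime_of_factor r hr)
      (UniqueFactorizationMonoid.dvd_of_mem_factors hr)
  · rintro rfl
    exact ⟨one_ne_zero, fun q hq hdvd => absurd (isUnit_of_dvd_one hdvd) hq.not_unit⟩

lemma hasSum_smooth_finset (p : ℕ → Ideal (𝓞 K)) (hp : ∀ n, (p n).IsPrime)
    (hp0 : ∀ n, p n ≠ ⊥) (hinj : Function.Injective p) (s : Finset ℕ) :
    HasSum (fun b : {b : Ideal (𝓞 K) // b ∈ {b : Ideal (𝓞 K) | IsSmoothIdeal K (p '' ↑s) b}} =>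
      ((Ideal.absNorm (b : Ideal (𝓞 K)) : ℝ))⁻¹)
      (∏ i ∈ s, (1 - ((Ideal.absNorm (p i) : ℝ))⁻¹)⁻¹) := by
  classical
  induction s using Finset.induction_on with
  | empty =>
    rw [Finset.prod_empty]
    have hmem : (1 : Ideal (𝓞 K)) ∈
        {b : Ideal (𝓞 K) | IsSmoothIdeal K (p '' ↑(∅ : Finset ℕ)) b} := by
      simp only [Set.mem_setOf_eq, Finset.coe_empty, Set.image_empty]
      exact isSmoothIdeal_empty_iff.mpr rfl
    have huniq : ∀ b : {b : Ideal (𝓞 K) //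
        b ∈ {b : Ideal (𝓞 K) | IsSmoothIdeal K (p '' ↑(∅ : Finset ℕ)) b}},
        b = ⟨1, hmem⟩ := by
      rintro ⟨b, hb⟩
      apply Subtype.ext
      have : IsSmoothIdeal K (∅ : Set (Ideal (𝓞 K))) b := by simpa using hb
      exact isSmoothIdeal_empty_iff.mp this
    have key := hasSum_single (f := fun b : {b : Ideal (𝓞 K) //
        b ∈ {b : Ideal (𝓞 K) | IsSmoothIdeal K (p '' ↑(∅ : Finset ℕ)) b}} =>
        ((Ideal.absNorm (b : Ideal (𝓞 K)) : ℝ))⁻¹) ⟨1, hmem⟩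
        (fun b' hb' => absurd (huniq b') hb')
    have h1 : ((Ideal.absNorm ((1 : Ideal (𝓞 K))) : ℝ))⁻¹ = (1 : ℝ) := by
      rw [map_one]
      norm_num
    simpa [h1] using key
  | @insert j s' hj ih =>
    rw [Finset.prod_insert hj]
    have himg : (p '' ↑(insert j s') : Set (Ideal (𝓞 K))) = {p j} ∪ p '' ↑s' := by
      rw [Finset.coe_insert, Set.image_insert_eq, Set.insert_eq]
    have hdisj : Disjoint ({p j} : Set (Ideal (𝓞 K))) (p '' ↑s') := by
      rw [Set.disjoint_left]
      rintro x rfl ⟨i, hi, hix⟩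
      exact hj (hinj hix ▸ hi)
    have hq : Prime (p j) := Ideal.prime_of_isPrime (hp0 j) (hp j)
    have key := hasSum_mul_set (K := K) hdisj
      (S := {b : Ideal (𝓞 K) | IsSmoothIdeal K {p j} b})
      (T := {b : Ideal (𝓞 K) | IsSmoothIdeal K (p '' ↑s') b})
      (U := {b : Ideal (𝓞 K) | IsSmoothIdeal K ({p j} ∪ p '' ↑s') b})
      (fun b hb => hb) (fun c hc => hc)
      (fun b hb c hc => hb.mul hc)
      (fun u hu => by
        obtain ⟨b', c, h1, h2, h3⟩ := isSmoothIdeal_split (K := K) hu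
        exact ⟨b', h1, c, h2, h3⟩)
      (hasSum_smooth_singleton hq) ih
    rw [himg]
    exact key


lemma hasSum_set_sub {S T : Set (Ideal (𝓞 K))} (hTS : T ⊆ S) {x y : ℝ}
    (hx : HasSum (fun b : {b : Ideal (𝓞 K) // b ∈ S} =>
      ((Ideal.absNorm (b : Ideal (𝓞 K)) : ℝ))⁻¹) x)
    (hy : HasSum (fun b : {b : Ideal (𝓞 K) // b ∈ T} =>
      ((Ideal.absNorm (b : Ideal (𝓞 K)) : ℝ))⁻¹) y) :
    HasSum (fun b : {b : Ideal (𝓞 K) // b ∈ S \ T} =>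
      ((Ideal.absNorm (b : Ideal (𝓞 K)) : ℝ))⁻¹) (x - y) := by
  have hx' : HasSum (S.indicator fun I : Ideal (𝓞 K) => ((Ideal.absNorm I : ℝ))⁻¹) x :=
    (hasSum_subtype_iff_indicator (f := fun I : Ideal (𝓞 K) => ((Ideal.absNorm I : ℝ))⁻¹) (s := S)).mp hx
  have hy' : HasSum (T.indicator fun I : Ideal (𝓞 K) => ((Ideal.absNorm I : ℝ))⁻¹) y :=
    (hasSum_subtype_iff_indicator (f := fun I : Ideal (𝓞 K) => ((Ideal.absNorm I : ℝ))⁻¹) (s := T)).mp hy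
  refine (hasSum_subtype_iff_indicator (f := fun I : Ideal (𝓞 K) => ((Ideal.absNorm I : ℝ))⁻¹) (s := S \ T)).mpr ?_
  rw [Set.indicator_sdiff hTS]
  exact hx'.sub hy'

lemma summable_subset {S T : Set (Ideal (𝓞 K))} (hST : S ⊆ T)
    (hT : Summable (fun b : {b : Ideal (𝓞 K) // b ∈ T} =>
      ((Ideal.absNorm (b : Ideal (𝓞 K)) : ℝ))⁻¹)) :
    Summable (fun b : {b : Ideal (𝓞 K) // b ∈ S} =>
      ((Ideal.absNorm (b : Ideal (𝓞 K)) : ℝ))⁻¹) := by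
  have hT' : Summable (T.indicator fun I : Ideal (𝓞 K) => ((Ideal.absNorm I : ℝ))⁻¹) :=
    (summable_subtype_iff_indicator (f := fun I : Ideal (𝓞 K) => ((Ideal.absNorm I : ℝ))⁻¹) (s := T)).mp hT
  refine (summable_subtype_iff_indicator (f := fun I : Ideal (𝓞 K) => ((Ideal.absNorm I : ℝ))⁻¹) (s := S)).mpr ?_
  refine hT'.of_nonneg_of_le
    (fun b => Set.indicator_nonneg (fun c _ => by positivity) b)
    (fun b => Set.indicator_le_indicator_of_subset hST (fun c => by positivity) b)

end aux

set_option maxHeartbeats 1600000 in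
/-- the sum of `1/N(b*)` over the `p_1,…,p_h`-ideals that are multiples
of some member of `𝒜` but not multiples of any `p_1,…,p_k`-ideal of `𝒜` equals
`Π_h (B_h - B_k)`. -/
theorem hasSum_second_class (K : Type*) [Field K] [NumberField K]
    (𝒜 : Set (Ideal (𝓞 K))) (h𝒜 : ∀ a ∈ 𝒜, a ≠ ⊥)
    (p : ℕ → Ideal (𝓞 K)) (hp : ∀ n, (p n).IsPrime) (hp0 : ∀ n, p n ≠ ⊥)
    (hinj : Function.Injective p)
    (k h : ℕ) (hkh : k ≤ h) :
    HasSum (fun b : {b : Ideal (𝓞 K) //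
          IsSmoothIdeal K (p '' Set.Iio h) b ∧ (∃ a ∈ 𝒜, b ≤ a) ∧
            ¬∃ a ∈ 𝒜, IsSmoothIdeal K (p '' Set.Iio k) a ∧ b ≤ a} =>
        ((Ideal.absNorm (b : Ideal (𝓞 K)) : ℝ))⁻¹)
      ((∏ i ∈ Finset.range h, (1 - ((Ideal.absNorm (p i) : ℝ))⁻¹)⁻¹) *
        (multB K 𝒜 p h - multB K 𝒜 p k)) := by
  classical
  have h𝒜0 : ∀ a ∈ 𝒜, a ≠ 0 := fun a ha => by
    rw [Submodule.zero_eq_bot]; exact h𝒜 a ha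
  -- Euler product over the middle range
  have hEPQ := hasSum_smooth_finset p hp hp0 hinj (Finset.Ico k h)
  rw [Finset.coe_Ico] at hEPQ
  -- summability over the sets of multiples
  have hMsum : ∀ j : ℕ, Summable (fun b : {b : Ideal (𝓞 K) //
      IsSmoothIdeal K (p '' Set.Iio j) b ∧ ∃ a ∈ 𝒜, b ≤ a} =>
      ((Ideal.absNorm (b : Ideal (𝓞 K)) : ℝ))⁻¹) := by
    intro j
    have hj := hasSum_smooth_finset p hp hp0 hinj (Finset.range j)
    rw [Finset.coe_range] at hj
    exact summable_subset (S := {b : Ideal (𝓞 K) |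
        IsSmoothIdeal K (p '' Set.Iio j) b ∧ ∃ a ∈ 𝒜, b ≤ a})
      (T := {b : Ideal (𝓞 K) | IsSmoothIdeal K (p '' Set.Iio j) b})
      (fun b hb => hb.1) hj.summable
  set Th := ∑' b : {b : Ideal (𝓞 K) //
      IsSmoothIdeal K (p '' Set.Iio h) b ∧ ∃ a ∈ 𝒜, b ≤ a},
      ((Ideal.absNorm (b : Ideal (𝓞 K)) : ℝ))⁻¹ with hThdef
  set Tk := ∑' b : {b : Ideal (𝓞 K) //
      IsSmoothIdeal K (p '' Set.Iio k) b ∧ ∃ a ∈ 𝒜, b ≤ a},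
      ((Ideal.absNorm (b : Ideal (𝓞 K)) : ℝ))⁻¹ with hTkdef
  have hTh : HasSum (fun b : {b : Ideal (𝓞 K) //
      IsSmoothIdeal K (p '' Set.Iio h) b ∧ ∃ a ∈ 𝒜, b ≤ a} =>
      ((Ideal.absNorm (b : Ideal (𝓞 K)) : ℝ))⁻¹) Th := (hMsum h).hasSum
  have hTk : HasSum (fun b : {b : Ideal (𝓞 K) //
      IsSmoothIdeal K (p '' Set.Iio k) b ∧ ∃ a ∈ 𝒜, b ≤ a} =>
      ((Ideal.absNorm (b : Ideal (𝓞 K)) : ℝ))⁻¹) Tk := (hMsum k).hasSum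
  -- disjointness and union of the prime sets
  have hPkQ : Disjoint (p '' Set.Iio k) (p '' Set.Ico k h) := by
    rw [Set.disjoint_left]
    rintro x ⟨i, hi, rfl⟩ ⟨i', hi', hix⟩
    have := hinj hix
    subst this
    simp only [Set.mem_Iio] at hi
    simp only [Set.mem_Ico] at hi'
    omega
  have hunion : p '' Set.Iio k ∪ p '' Set.Ico k h = p '' Set.Iio h := by
    rw [← Set.image_union, Set.Iio_union_Ico_eq_Iio hkh]
  -- the first-class sum
  have hFst : HasSum (fun b : {b : Ideal (𝓞 K) // b ∈ {b : Ideal (𝓞 K) |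
      IsSmoothIdeal K (p '' Set.Iio h) b ∧
        ∃ a ∈ 𝒜, IsSmoothIdeal K (p '' Set.Iio k) a ∧ b ≤ a}} =>
      ((Ideal.absNorm (b : Ideal (𝓞 K)) : ℝ))⁻¹)
      (Tk * ∏ i ∈ Finset.Ico k h, (1 - ((Ideal.absNorm (p i) : ℝ))⁻¹)⁻¹) := by
    refine hasSum_mul_set hPkQ
      (S := {b : Ideal (𝓞 K) | IsSmoothIdeal K (p '' Set.Iio k) b ∧ ∃ a ∈ 𝒜, b ≤ a})
      (T := {b : Ideal (𝓞 K) | IsSmoothIdeal K (p '' Set.Ico k h) b})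
      (fun b hb => hb.1) (fun c hc => hc) ?_ ?_ hTk hEPQ
    · rintro b ⟨hbs, a, ha𝒜, hba⟩ c hc
      have hab : a ∣ b := Ideal.dvd_iff_le.mpr hba
      refine ⟨hunion ▸ hbs.mul hc, a, ha𝒜, hbs.of_dvd hab (h𝒜0 a ha𝒜), ?_⟩
      exact Ideal.le_of_dvd (hab.trans (dvd_mul_right b c))
    · rintro u ⟨hus, a, ha𝒜, has, hua⟩
      rw [← hunion] at hus
      obtain ⟨b', c, hb', hc, rfl⟩ := isSmoothIdeal_split hus
      have hab' : a ∣ b' :=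
        (has.isRelPrime hc hPkQ).dvd_of_dvd_mul_right (Ideal.dvd_iff_le.mpr hua)
      exact ⟨b', ⟨hb', a, ha𝒜, Ideal.le_of_dvd hab'⟩, c, hc, rfl⟩
  -- second class = all minus first class
  have hsub : ({b : Ideal (𝓞 K) | IsSmoothIdeal K (p '' Set.Iio h) b ∧
      ∃ a ∈ 𝒜, IsSmoothIdeal K (p '' Set.Iio k) a ∧ b ≤ a} : Set (Ideal (𝓞 K))) ⊆
      {b : Ideal (𝓞 K) | IsSmoothIdeal K (p '' Set.Iio h) b ∧ ∃ a ∈ 𝒜, b ≤ a} := by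
    rintro b ⟨hbs, a, ha𝒜, _, hba⟩
    exact ⟨hbs, a, ha𝒜, hba⟩
  have hSnd := hasSum_set_sub hsub hTh hFst
  have hset : ({b : Ideal (𝓞 K) | IsSmoothIdeal K (p '' Set.Iio h) b ∧ ∃ a ∈ 𝒜, b ≤ a} \
      {b : Ideal (𝓞 K) | IsSmoothIdeal K (p '' Set.Iio h) b ∧
        ∃ a ∈ 𝒜, IsSmoothIdeal K (p '' Set.Iio k) a ∧ b ≤ a}) =
      {b : Ideal (𝓞 K) | IsSmoothIdeal K (p '' Set.Iio h) b ∧ (∃ a ∈ 𝒜, b ≤ a) ∧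
        ¬∃ a ∈ 𝒜, IsSmoothIdeal K (p '' Set.Iio k) a ∧ b ≤ a} := by
    ext b
    simp only [Set.mem_diff, Set.mem_setOf_eq]
    constructor
    · rintro ⟨⟨h1, h2⟩, h3⟩
      exact ⟨h1, h2, fun hx => h3 ⟨h1, hx⟩⟩
    · rintro ⟨h1, h2, h3⟩
      exact ⟨⟨h1, h2⟩, fun hx => h3 hx.2⟩
  rw [hset] at hSnd
  -- the value
  have hpos : ∀ i : ℕ, (0 : ℝ) < 1 - ((Ideal.absNorm (p i) : ℝ))⁻¹ := by
    intro i
    have h2 : 2 ≤ Ideal.absNorm (p i) :=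
      two_le_absNorm (Ideal.prime_of_isPrime (hp0 i) (hp i))
    have h1 : (1 : ℝ) < (Ideal.absNorm (p i) : ℝ) := by exact_mod_cast (by omega : 1 < Ideal.absNorm (p i))
    have : ((Ideal.absNorm (p i) : ℝ))⁻¹ < 1 := by
      rw [inv_lt_one_iff₀]
      exact Or.inr h1
    linarith
  have hne : ∀ i : ℕ, (1 - ((Ideal.absNorm (p i) : ℝ))⁻¹)⁻¹ ≠ 0 :=
    fun i => inv_ne_zero (ne_of_gt (hpos i))
  have hEPk0 : (∏ i ∈ Finset.range k, (1 - ((Ideal.absNorm (p i) : ℝ))⁻¹)⁻¹) ≠ 0 :=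
    Finset.prod_ne_zero_iff.mpr fun i _ => hne i
  have hEPQ0 : (∏ i ∈ Finset.Ico k h, (1 - ((Ideal.absNorm (p i) : ℝ))⁻¹)⁻¹) ≠ 0 :=
    Finset.prod_ne_zero_iff.mpr fun i _ => hne i
  have hEPh_eq : (∏ i ∈ Finset.range h, (1 - ((Ideal.absNorm (p i) : ℝ))⁻¹)⁻¹) =
      (∏ i ∈ Finset.range k, (1 - ((Ideal.absNorm (p i) : ℝ))⁻¹)⁻¹) *
      (∏ i ∈ Finset.Ico k h, (1 - ((Ideal.absNorm (p i) : ℝ))⁻¹)⁻¹) := by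
    rw [Finset.range_eq_Ico]
    rw [Finset.range_eq_Ico]
    exact (Finset.prod_Ico_consecutive (fun i => (1 - ((Ideal.absNorm (p i) : ℝ))⁻¹)⁻¹) (Nat.zero_le k) hkh).symm
  have hmBh : multB K 𝒜 p h =
      (∏ i ∈ Finset.range h, (1 - ((Ideal.absNorm (p i) : ℝ))⁻¹)⁻¹)⁻¹ * Th := rfl
  have hmBk : multB K 𝒜 p k =
      (∏ i ∈ Finset.range k, (1 - ((Ideal.absNorm (p i) : ℝ))⁻¹)⁻¹)⁻¹ * Tk := rfl
  have hval : (∏ i ∈ Finset.range h, (1 - ((Ideal.absNorm (p i) : ℝ))⁻¹)⁻¹) *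
      (multB K 𝒜 p h - multB K 𝒜 p k) =
      Th - Tk * ∏ i ∈ Finset.Ico k h, (1 - ((Ideal.absNorm (p i) : ℝ))⁻¹)⁻¹ := by
    rw [hmBh, hmBk, hEPh_eq]
    have h1 : ((∏ i ∈ Finset.range k, (1 - ((Ideal.absNorm (p i) : ℝ))⁻¹)⁻¹) *
        (∏ i ∈ Finset.Ico k h, (1 - ((Ideal.absNorm (p i) : ℝ))⁻¹)⁻¹)) *
        (((∏ i ∈ Finset.range k, (1 - ((Ideal.absNorm (p i) : ℝ))⁻¹)⁻¹) *
        (∏ i ∈ Finset.Ico k h, (1 - ((Ideal.absNorm (p i) : ℝ))⁻¹)⁻¹))⁻¹ * Th) = Th := by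
      rw [← mul_assoc, mul_inv_cancel₀ (mul_ne_zero hEPk0 hEPQ0), one_mul]
    have h2 : ((∏ i ∈ Finset.range k, (1 - ((Ideal.absNorm (p i) : ℝ))⁻¹)⁻¹) *
        (∏ i ∈ Finset.Ico k h, (1 - ((Ideal.absNorm (p i) : ℝ))⁻¹)⁻¹)) *
        ((∏ i ∈ Finset.range k, (1 - ((Ideal.absNorm (p i) : ℝ))⁻¹)⁻¹)⁻¹ * Tk) =
        Tk * ∏ i ∈ Finset.Ico k h, (1 - ((Ideal.absNorm (p i) : ℝ))⁻¹)⁻¹ := by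
      have : ((∏ i ∈ Finset.range k, (1 - ((Ideal.absNorm (p i) : ℝ))⁻¹)⁻¹) *
          (∏ i ∈ Finset.Ico k h, (1 - ((Ideal.absNorm (p i) : ℝ))⁻¹)⁻¹)) *
          ((∏ i ∈ Finset.range k, (1 - ((Ideal.absNorm (p i) : ℝ))⁻¹)⁻¹)⁻¹ * Tk) =
          ((∏ i ∈ Finset.range k, (1 - ((Ideal.absNorm (p i) : ℝ))⁻¹)⁻¹) *
          (∏ i ∈ Finset.range k, (1 - ((Ideal.absNorm (p i) : ℝ))⁻¹)⁻¹)⁻¹) *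
          (Tk * ∏ i ∈ Finset.Ico k h, (1 - ((Ideal.absNorm (p i) : ℝ))⁻¹)⁻¹) := by ring
      rw [this, mul_inv_cancel₀ hEPk0, one_mul]
    rw [mul_sub, h1, h2]
  rw [hval]
  exact hSnd
end
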